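/- Optimal recovery error for the Cauchy problem for the heat equation on a time slice: Let d ∈ ℕ, D = ℝ^d × (0,∞), t₀ > 0, and let A₁, A₂ be the integral operators with kernels K₁((u,t),(v,s)) := (4π(t−s))^{−d/2} exp(−|u−v|²/(4(t−s))) for 0 < s < t (and 0 otherwise) and K₂((u,t),v) := (4πt)^{−d/2} exp(−|u−v|²/(4t)), so that x = A₁ f + A₂ g is the solution of ∂x/∂t − Δx = f on D, x(·,0) = g. Let M₁ ⊂ D and M₂ ⊂ ℝ^d be compact sets, W₁ = H̃^{ω_1}(M₁), W₂ = H̃^{ω_2}(M₂), with evaluation information at finite point sets Q₁ ⊂ M₁, Q₂ ⊂ M₂ known with errors e₁, e₂. Measuring the output in L¹ on the time slice N = ℝ^d × {t₀}, the error of optimal recovery of the operator Ā = (A₁ A₂) on W₁ × W₂ equals ∫_{ℝ^d} ∫_0^{t₀} τ̃₁(v,s) ds dv + ∫_{ℝ^d} τ̃₂(v) dv, where τ̃_i := τ̃_{ω_i,Q_i,e_i}, and the optimal method is Φ = Ā ∘ diag(L̃₁, L̃₂) with L̃_i := L̃_{ω_i,Q_i,e_i}. -/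

import Mathlib

open MeasureTheory intervalIntegral
open scoped ENNReal

/-- `τ_{ω,Q,e}` on the ambient space: `min_j (e_j + ω(ρ(t,q_j)))` on `M'`, `0` off `M'`. -/
noncomputable def tauOR {M : Type*} [MetricSpace M] (ω : ℝ → ℝ) (M' : Set M) {n : ℕ}
    (q : Fin n → M) (e : Fin n → ℝ) (t : M) : ℝ :=
  haveI := Classical.dec (t ∈ M')
  if t ∈ M' then ⨅ j, (e j + ω (dist t (q j))) else 0

/-- The truncated function `τ̃_{ω,Q,e}(t) = min { τ_{ω,Q,e}(t), ω(ρ(t,∂M')) }` on `M'`,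
and `0` off `M'`. -/
noncomputable def tauTildeOR {M : Type*} [MetricSpace M] (ω : ℝ → ℝ) (M' : Set M) {n : ℕ}
    (q : Fin n → M) (e : Fin n → ℝ) (t : M) : ℝ :=
  haveI := Classical.dec (t ∈ M')
  if t ∈ M' then
    min (⨅ j, (e j + ω (dist t (q j)))) (ω (Metric.infDist t (frontier M'))) else 0

/-- The method `L̃_{ω,Q,e}`: equal to `z_j` on the cell `Π̃_j = Π_j ∖ Π̃_0`, and `0`
on `Π̃_0 = {t ∈ M' : ω(ρ(t,∂M')) ≤ τ(t)}` and off `M'`. -/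
noncomputable def LmethTildeOR {M : Type*} [MetricSpace M] (ω : ℝ → ℝ) (M' : Set M) {n : ℕ}
    (q : Fin n → M) (e : Fin n → ℝ) (z : Fin n → ℝ) (t : M) : ℝ :=
  haveI := Classical.dec
  if t ∈ M' ∧ ¬ (ω (Metric.infDist t (frontier M')) ≤ tauOR ω M' q e t) then
    (if h : (Finset.univ.filter fun j => tauOR ω M' q e t = e j + ω (dist t (q j))).Nonempty
     then z ((Finset.univ.filter fun j => tauOR ω M' q e t = e j + ω (dist t (q j))).min' h)
     else 0)
  else 0

/-- The class `H̃^ω(M')`: continuous functions vanishing outside `M'` whose restriction to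
`M'` admits `ω` as a majorant of its modulus of continuity. -/
def HtildeOR {M : Type*} [MetricSpace M] (ω : ℝ → ℝ) (M' : Set M) : Set (M → ℝ) :=
  {x | Continuous x ∧ (∀ t ∉ M', x t = 0) ∧
    ∀ t ∈ M', ∀ t' ∈ M', |x t - x t'| ≤ ω (dist t t')}


section Aux

open Metric Set

lemma measurable_rpow_const_aux (c : ℝ) : Measurable fun x : ℝ => x ^ c := by
  have h : ∀ x : ℝ, x ^ c = if x = 0 then (if c = 0 then 1 else 0)
      else Real.exp (Real.log x * c) * (if x < 0 then Real.cos (c * Real.pi) else 1) := by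
    intro x
    rcases lt_trichotomy x 0 with hx | hx | hx
    · rw [if_neg hx.ne, if_pos hx, Real.rpow_def_of_neg hx]
    · subst hx; simp only [if_pos rfl]
      by_cases hc : c = 0
      · simp [hc]
      · simp [hc, Real.zero_rpow hc]
    · rw [if_neg hx.ne', if_neg (not_lt.2 hx.le), mul_one, Real.rpow_def_of_pos hx]
  simp only [h]
  apply Measurable.ite (measurableSet_eq_fun measurable_id measurable_const) measurable_const
  exact ((Real.measurable_log.mul measurable_const).exp).mul
    (Measurable.ite (measurableSet_lt measurable_id measurable_const) measurable_const
      measurable_const)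

variable {M : Type*} [MetricSpace M] {ω : ℝ → ℝ} {M' : Set M} {n : ℕ}
  {q : Fin n → M} {e : Fin n → ℝ}

lemma cont_omega_dist (hω : ContinuousOn ω (Set.Ici 0)) (c : M) :
    Continuous fun t => ω (dist t c) :=
  hω.comp_continuous (continuous_id.dist continuous_const) fun _ => dist_nonneg

lemma cont_omega_infDist (hω : ContinuousOn ω (Set.Ici 0)) (s : Set M) :
    Continuous fun t => ω (infDist t s) :=
  hω.comp_continuous (continuous_infDist_pt s) fun _ => infDist_nonneg

lemma cont_tauInner (hn : 0 < n) (hω : ContinuousOn ω (Set.Ici 0)) :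
    Continuous fun t : M => ⨅ j, (e j + ω (dist t (q j))) := by
  haveI : Nonempty (Fin n) := ⟨⟨0, hn⟩⟩
  have h := Continuous.finset_inf'_apply (s := (Finset.univ : Finset (Fin n)))
    (f := fun j t => e j + ω (dist t (q j))) Finset.univ_nonempty
    (fun j _ => continuous_const.add (cont_omega_dist hω (q j)))
  convert h using 2 with t
  rw [Finset.inf'_univ_eq_ciInf]

lemma tauInner_nonneg (hn : 0 < n) (he : ∀ j, 0 ≤ e j) (hωnn : ∀ s, 0 ≤ s → 0 ≤ ω s) (t : M) :
    0 ≤ ⨅ j, (e j + ω (dist t (q j))) := by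
  haveI : Nonempty (Fin n) := ⟨⟨0, hn⟩⟩
  exact le_ciInf fun j => add_nonneg (he j) (hωnn _ dist_nonneg)

lemma tauOR_of_mem (ht : t ∈ M') : tauOR ω M' q e t = ⨅ j, (e j + ω (dist t (q j))) := by
  simp only [tauOR]
  exact if_pos ht

lemma tauTildeOR_of_mem {t : M} (ht : t ∈ M') :
    tauTildeOR ω M' q e t
      = min (⨅ j, (e j + ω (dist t (q j)))) (ω (infDist t (frontier M'))) := by
  simp only [tauTildeOR]
  exact if_pos ht

lemma tauTildeOR_of_not_mem {t : M} (ht : t ∉ M') : tauTildeOR ω M' q e t = 0 := by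
  simp only [tauTildeOR]
  exact if_neg ht

lemma tauTildeOR_nonneg (hn : 0 < n) (he : ∀ j, 0 ≤ e j) (hωnn : ∀ s, 0 ≤ s → 0 ≤ ω s) (t : M) :
    0 ≤ tauTildeOR ω M' q e t := by
  by_cases ht : t ∈ M'
  · rw [tauTildeOR_of_mem ht]
    exact le_min (tauInner_nonneg hn he hωnn t) (hωnn _ infDist_nonneg)
  · rw [tauTildeOR_of_not_mem ht]

end Aux

section Aux2

open Metric Set

variable {M : Type*} [MetricSpace M] {ω : ℝ → ℝ} {M' : Set M} {n : ℕ}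
  {q : Fin n → M} {e : Fin n → ℝ}

/-- "one-sided modulus" inequality for the min-function `G`. -/
lemma Gfun_le (hn : 0 < n) (hmono : MonotoneOn ω (Set.Ici 0))
    (hsub : ∀ s t : ℝ, 0 ≤ s → 0 ≤ t → ω (s + t) ≤ ω s + ω t) (t t' : M) :
    min (⨅ j, (e j + ω (dist t (q j)))) (ω (infDist t (frontier M')))
      ≤ min (⨅ j, (e j + ω (dist t' (q j)))) (ω (infDist t' (frontier M')))
        + ω (dist t t') := by
  haveI : Nonempty (Fin n) := ⟨⟨0, hn⟩⟩
  have key : ∀ a b : ℝ, 0 ≤ a → 0 ≤ b → a ≤ b + dist t t' → ω a ≤ ω b + ω (dist t t') := by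
    intro a b ha hb hab
    calc ω a ≤ ω (b + dist t t') :=
        hmono ha (add_nonneg hb dist_nonneg) hab
      _ ≤ ω b + ω (dist t t') := hsub _ _ hb dist_nonneg
  have h1 : (⨅ j, (e j + ω (dist t (q j))))
      ≤ (⨅ j, (e j + ω (dist t' (q j)))) + ω (dist t t') := by
    obtain ⟨j₀, hj₀⟩ := exists_eq_ciInf_of_finite (f := fun j => e j + ω (dist t' (q j)))
    calc (⨅ j, (e j + ω (dist t (q j)))) ≤ e j₀ + ω (dist t (q j₀)) :=
        ciInf_le (Finite.bddBelow_range _) j₀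
      _ ≤ e j₀ + (ω (dist t' (q j₀)) + ω (dist t t')) := by
          gcongr
          exact key _ _ dist_nonneg dist_nonneg
            ((dist_triangle t t' (q j₀)).trans_eq (add_comm _ _))
      _ = (e j₀ + ω (dist t' (q j₀))) + ω (dist t t') := by ring
      _ = (⨅ j, (e j + ω (dist t' (q j)))) + ω (dist t t') := by rw [hj₀]
  have h2 : ω (infDist t (frontier M'))
      ≤ ω (infDist t' (frontier M')) + ω (dist t t') :=
    key _ _ infDist_nonneg infDist_nonneg (infDist_le_infDist_add_dist)
  calc min _ _ ≤ min ((⨅ j, (e j + ω (dist t' (q j)))) + ω (dist t t'))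
        (ω (infDist t' (frontier M')) + ω (dist t t')) :=
      le_min ((min_le_left _ _).trans h1) ((min_le_right _ _).trans h2)
    _ = _ := min_add_add_right _ _ _

lemma tauTildeOR_modulus (hn : 0 < n) (hmono : MonotoneOn ω (Set.Ici 0))
    (hsub : ∀ s t : ℝ, 0 ≤ s → 0 ≤ t → ω (s + t) ≤ ω s + ω t)
    {t t' : M} (ht : t ∈ M') (ht' : t' ∈ M') :
    |tauTildeOR ω M' q e t - tauTildeOR ω M' q e t'| ≤ ω (dist t t') := by
  rw [tauTildeOR_of_mem ht, tauTildeOR_of_mem ht', abs_sub_le_iff]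
  constructor
  · have := Gfun_le (e := e) (q := q) (M' := M') hn hmono hsub t t'
    linarith
  · have := Gfun_le (e := e) (q := q) (M' := M') hn hmono hsub t' t
    rw [dist_comm t' t] at this
    linarith

lemma tauTildeOR_continuous (hn : 0 < n) (hM' : IsClosed M') (hω0 : ω 0 = 0)
    (hωc : ContinuousOn ω (Set.Ici 0)) (he : ∀ j, 0 ≤ e j)
    (hωnn : ∀ s, 0 ≤ s → 0 ≤ ω s) :
    Continuous (tauTildeOR ω M' q e) := by
  haveI : Nonempty (Fin n) := ⟨⟨0, hn⟩⟩
  have hGc : Continuous (fun t : M =>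
      min (⨅ j, (e j + ω (dist t (q j)))) (ω (infDist t (frontier M')))) :=
    (cont_tauInner hn hωc).min (cont_omega_infDist hωc _)
  rw [continuous_iff_continuousAt]
  intro x
  by_cases hx : x ∈ interior M'
  · refine hGc.continuousAt.congr ?_
    filter_upwards [isOpen_interior.mem_nhds hx] with t ht
    exact (tauTildeOR_of_mem (interior_subset ht)).symm
  by_cases hx2 : x ∈ M'
  · -- frontier point
    have hxf : x ∈ frontier M' := by
      rw [hM'.frontier_eq]
      exact ⟨hx2, hx⟩
    have hGx : min (⨅ j, (e j + ω (dist x (q j)))) (ω (infDist x (frontier M'))) = 0 := by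
      have h0 : infDist x (frontier M') = 0 := infDist_zero_of_mem hxf
      rw [h0, hω0]
      exact min_eq_right (tauInner_nonneg hn he hωnn x)
    have hval : tauTildeOR ω M' q e x = 0 := by
      rw [tauTildeOR_of_mem hx2, hGx]
    unfold ContinuousAt
    rw [hval]
    have h2 : Filter.Tendsto
        (fun t => |min (⨅ j, (e j + ω (dist t (q j)))) (ω (infDist t (frontier M')))|)
        (nhds x) (nhds 0) := by
      have h3 := (hGc.abs).tendsto x
      simpa only [hGx, abs_zero] using h3
    refine squeeze_zero_norm ?_ h2
    intro t
    by_cases ht : t ∈ M'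
    · rw [tauTildeOR_of_mem ht, Real.norm_eq_abs]
    · rw [tauTildeOR_of_not_mem ht]; simp
  · refine ContinuousAt.congr (continuousAt_const (y := (0:ℝ))) ?_
    filter_upwards [hM'.isOpen_compl.mem_nhds hx2] with t ht
    exact (tauTildeOR_of_not_mem ht).symm

lemma tauTildeOR_mem_Htilde (hn : 0 < n) (hM' : IsClosed M') (hω0 : ω 0 = 0)
    (hωc : ContinuousOn ω (Set.Ici 0)) (hmono : MonotoneOn ω (Set.Ici 0))
    (hsub : ∀ s t : ℝ, 0 ≤ s → 0 ≤ t → ω (s + t) ≤ ω s + ω t)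
    (he : ∀ j, 0 ≤ e j) (hωnn : ∀ s, 0 ≤ s → 0 ≤ ω s) :
    tauTildeOR ω M' q e ∈ HtildeOR ω M' :=
  ⟨tauTildeOR_continuous hn hM' hω0 hωc he hωnn,
   fun _ ht => tauTildeOR_of_not_mem ht,
   fun _ ht _ ht' => tauTildeOR_modulus hn hmono hsub ht ht'⟩

lemma neg_mem_Htilde {f : M → ℝ} (hf : f ∈ HtildeOR ω M') : (fun t => -f t) ∈ HtildeOR ω M' := by
  refine ⟨hf.1.neg, fun t ht => by simp only []; rw [hf.2.1 t ht, neg_zero],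
    fun t ht t' ht' => ?_⟩
  simp only []
  have h := hf.2.2 t ht t' ht'
  calc |-f t - -f t'| = |f t - f t'| := by rw [← abs_neg]; ring_nf
    _ ≤ ω (dist t t') := h

lemma tauTildeOR_at_node (hn : 0 < n) (hω0 : ω 0 = 0) {j : Fin n} (hq : q j ∈ M') :
    tauTildeOR ω M' q e (q j) ≤ e j := by
  haveI : Nonempty (Fin n) := ⟨⟨0, hn⟩⟩
  rw [tauTildeOR_of_mem hq]
  refine (min_le_left _ _).trans ?_
  have := ciInf_le (f := fun i => e i + ω (dist (q j) (q i))) (Finite.bddBelow_range _) j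
  simpa [hω0] using this

end Aux2

section Aux3

open Metric Set

variable {M : Type*} [MetricSpace M] {ω : ℝ → ℝ} {M' : Set M} {n : ℕ}
  {q : Fin n → M} {e : Fin n → ℝ}

lemma Lmeth_of_not_mem {z : Fin n → ℝ} {t : M} (ht : t ∉ M') :
    LmethTildeOR ω M' q e z t = 0 := by
  simp only [LmethTildeOR]
  rw [if_neg (by tauto)]

lemma Lmeth_abs_le (hn : 0 < n) (z : Fin n → ℝ) (t : M) :
    |LmethTildeOR ω M' q e z t|
      ≤ Finset.univ.sup' ⟨⟨0, hn⟩, Finset.mem_univ _⟩ (fun j => |z j|) := by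
  have hB : ∀ j, |z j| ≤ Finset.univ.sup' ⟨⟨0, hn⟩, Finset.mem_univ _⟩ (fun j => |z j|) :=
    fun j => Finset.le_sup' (fun j => |z j|) (Finset.mem_univ j)
  have h0 : (0:ℝ) ≤ Finset.univ.sup' ⟨⟨0, hn⟩, Finset.mem_univ _⟩ (fun j => |z j|) :=
    (abs_nonneg _).trans (hB ⟨0, hn⟩)
  simp only [LmethTildeOR]
  split_ifs with h1 h2
  · exact hB _
  · simpa using h0
  · simpa using h0

/-- Pointwise error bound for the method `L̃`. -/
lemma method_pointwise_bound [PreconnectedSpace M] [NoncompactSpace M]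
    (hM' : IsCompact M') (hn : 0 < n) (hq : ∀ j, q j ∈ M')
    (hmono : MonotoneOn ω (Set.Ici 0))
    {f : M → ℝ} (hf : f ∈ HtildeOR ω M') {z : Fin n → ℝ} (hz : ∀ j, |z j - f (q j)| ≤ e j)
    (t : M) : |f t - LmethTildeOR ω M' q e z t| ≤ tauTildeOR ω M' q e t := by
  haveI : Nonempty (Fin n) := ⟨⟨0, hn⟩⟩
  by_cases ht : t ∈ M'
  · by_cases hbd : ω (infDist t (frontier M')) ≤ tauOR ω M' q e t
    · -- on Π̃₀ : the method is 0 and |f t| ≤ ω(dist to frontier)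
      have hL : LmethTildeOR ω M' q e z t = 0 := by
        simp only [LmethTildeOR]
        rw [if_neg (by tauto)]
      have hFne : (frontier M').Nonempty := by
        by_contra hfe
        rw [Set.not_nonempty_iff_eq_empty] at hfe
        have hclopen : IsClopen M' := isClopen_iff_frontier_eq_empty.2 hfe
        rcases isClopen_iff.1 hclopen with h | h
        · rw [h] at ht; exact ht
        · exact noncompact_univ M (h ▸ hM')
      have hFc : IsCompact (frontier M') :=
        IsCompact.of_isClosed_subset hM' isClosed_frontier (hM'.isClosed.frontier_subset)
      obtain ⟨y, hyF, hyd⟩ := hFc.exists_infDist_eq_dist hFne t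
      have hfy : f y = 0 := by
        have hsub : closure M'ᶜ ⊆ f ⁻¹' {0} :=
          closure_minimal (fun x hx => hf.2.1 x hx)
            (isClosed_singleton.preimage hf.1)
        have : y ∈ closure M'ᶜ := ((frontier_eq_closure_inter_closure (s := M')) ▸ hyF).2
        simpa using hsub this
      have hft : |f t| ≤ ω (infDist t (frontier M')) := by
        have := hf.2.2 t ht y (hM'.isClosed.frontier_subset hyF)
        rw [hfy, sub_zero] at this
        rwa [hyd]
      rw [hL, sub_zero, tauTildeOR_of_mem ht]
      rw [tauOR_of_mem ht] at hbd
      rw [min_eq_right hbd]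
      exact hft
    · -- on a cell Π̃_j
      have hfilt : (Finset.univ.filter
          fun j => tauOR ω M' q e t = e j + ω (dist t (q j))).Nonempty := by
        obtain ⟨j₀, hj₀⟩ := exists_eq_ciInf_of_finite (f := fun j => e j + ω (dist t (q j)))
        exact ⟨j₀, Finset.mem_filter.2 ⟨Finset.mem_univ _, by rw [tauOR_of_mem ht, ← hj₀]⟩⟩
      set j' := (Finset.univ.filter
          fun j => tauOR ω M' q e t = e j + ω (dist t (q j))).min' hfilt with hj'
      have hj'mem := Finset.min'_mem _ hfilt
      have hj'eq : tauOR ω M' q e t = e j' + ω (dist t (q j')) :=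
        (Finset.mem_filter.1 hj'mem).2
      have hL : LmethTildeOR ω M' q e z t = z j' := by
        simp only [LmethTildeOR]
        rw [if_pos ⟨ht, hbd⟩, dif_pos hfilt]
      have hbound : |f t - z j'| ≤ tauOR ω M' q e t := by
        calc |f t - z j'| ≤ |f t - f (q j')| + |f (q j') - z j'| := by
              have := abs_sub_le (f t) (f (q j')) (z j')
              linarith
          _ ≤ ω (dist t (q j')) + e j' := by
              gcongr
              · exact hf.2.2 t ht (q j') (hq j')
              · rw [abs_sub_comm]; exact hz j'
          _ = tauOR ω M' q e t := by rw [hj'eq]; ring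
      rw [hL, tauTildeOR_of_mem ht]
      rw [tauOR_of_mem ht] at hbound hbd
      rw [min_eq_left (le_of_lt (not_le.1 hbd))]
      exact hbound
  · rw [hf.2.1 t ht, Lmeth_of_not_mem ht, tauTildeOR_of_not_mem ht, sub_zero, abs_zero]

variable [MeasurableSpace M] [OpensMeasurableSpace M]

lemma tauOR_measurable (hn : 0 < n) (hM' : IsClosed M')
    (hωc : ContinuousOn ω (Set.Ici 0)) : Measurable (tauOR ω M' q e) := by
  have : tauOR ω M' q e = fun t =>
      Set.indicator M' (fun t => ⨅ j, (e j + ω (dist t (q j)))) t := by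
    funext t
    by_cases ht : t ∈ M'
    · rw [tauOR_of_mem ht, Set.indicator_of_mem ht]
    · rw [Set.indicator_of_notMem ht]; simp only [tauOR]; exact if_neg ht
  rw [this]
  exact ((cont_tauInner hn hωc).measurable).indicator hM'.measurableSet

lemma Lmeth_measurable (hn : 0 < n) (hM' : IsClosed M')
    (hωc : ContinuousOn ω (Set.Ici 0)) (z : Fin n → ℝ) :
    Measurable (LmethTildeOR ω M' q e z) := by
  classical
  haveI : Nonempty (Fin n) := ⟨⟨0, hn⟩⟩
  have hτ : Measurable (tauOR ω M' q e) := tauOR_measurable hn hM' hωc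
  set P : Set M := {t | t ∈ M' ∧ ¬ (ω (infDist t (frontier M')) ≤ tauOR ω M' q e t)} with hP
  have hPm : MeasurableSet P :=
    (hM'.measurableSet).inter
      ((measurableSet_le ((cont_omega_infDist hωc _).measurable) hτ)).compl
  have hAm : ∀ j : Fin n, MeasurableSet {t : M | tauOR ω M' q e t = e j + ω (dist t (q j))} :=
    fun j => measurableSet_eq_fun hτ (continuous_const.add (cont_omega_dist hωc (q j))).measurable
  set Filt : M → Finset (Fin n) := fun t =>
    Finset.univ.filter fun j => tauOR ω M' q e t = e j + ω (dist t (q j)) with hFilt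
  have hcell : ∀ S : Finset (Fin n), MeasurableSet {t : M | Filt t = S} := by
    intro S
    have : {t : M | Filt t = S} = ⋂ j : Fin n,
        (if j ∈ S then {t : M | tauOR ω M' q e t = e j + ω (dist t (q j))}
         else {t : M | tauOR ω M' q e t = e j + ω (dist t (q j))}ᶜ) := by
      ext t
      simp only [Set.mem_iInter, Set.mem_setOf_eq]
      constructor
      · intro h j
        by_cases hj : j ∈ S
        · rw [if_pos hj]
          have := hj; rw [← h, hFilt, Finset.mem_filter] at this
          exact this.2
        · rw [if_neg hj]
          intro hcontra
          exact hj (h ▸ (Finset.mem_filter.2 ⟨Finset.mem_univ _, hcontra⟩))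
      · intro h
        ext j
        rw [hFilt, Finset.mem_filter]
        by_cases hj : j ∈ S
        · have := h j; rw [if_pos hj] at this
          exact ⟨fun _ => hj, fun _ => ⟨Finset.mem_univ _, this⟩⟩
        · have := h j; rw [if_neg hj] at this
          exact ⟨fun hc => absurd hc.2 this, fun hc => absurd hc hj⟩
    rw [this]
    exact MeasurableSet.iInter fun j => by
      by_cases hj : j ∈ S
      · rw [if_pos hj]; exact hAm j
      · rw [if_neg hj]; exact (hAm j).compl
  have hrepr : LmethTildeOR ω M' q e z = fun t =>
      ∑ S : Finset (Fin n), Set.indicator (P ∩ {t : M | Filt t = S})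
        (fun _ => @dite ℝ S.Nonempty (Classical.dec _) (fun h => z (S.min' h)) (fun _ => 0)) t := by
    funext t
    by_cases hPt : t ∈ P
    · rw [Finset.sum_eq_single (Filt t)]
      · rw [Set.indicator_of_mem
            (show t ∈ P ∩ {t' | Filt t' = Filt t} from ⟨hPt, rfl⟩)]
        simp only [LmethTildeOR]
        rw [if_pos hPt.out]
      · intro S _ hS
        exact Set.indicator_of_notMem (fun hmem => hS (hmem.2.symm)) _
      · intro h; exact absurd (Finset.mem_univ _) h
    · simp only [LmethTildeOR]
      rw [if_neg (by rw [hP] at hPt; exact hPt)]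
      symm
      apply Finset.sum_eq_zero
      intro S _
      exact Set.indicator_of_notMem (fun hmem => hPt hmem.1) _
  rw [hrepr]
  exact Finset.measurable_sum _ fun S _ =>
    (measurable_const.indicator (hPm.inter (hcell S)))

/-- A function in `H̃^ω(M')` with compact `M'` is bounded. -/
lemma Htilde_bounded (hM' : IsCompact M') {f : M → ℝ} (hf : f ∈ HtildeOR ω M') :
    ∃ C : ℝ, 0 ≤ C ∧ ∀ t, |f t| ≤ C := by
  obtain ⟨C, hC⟩ := hM'.exists_bound_of_continuousOn (hf.1.continuousOn)
  refine ⟨max C 0, le_max_right _ _, fun t => ?_⟩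
  by_cases ht : t ∈ M'
  · exact le_trans (by simpa using hC t ht) (le_max_left _ _)
  · rw [hf.2.1 t ht, abs_zero]; exact le_max_right _ _

end Aux3

section Kernel

open Real MeasureTheory

variable {d : ℕ}

/-- The heat kernel. -/
noncomputable def hK (d : ℕ) (r : ℝ) (u v : EuclideanSpace ℝ (Fin d)) : ℝ :=
  (4 * Real.pi * r) ^ (-(d : ℝ) / 2) * Real.exp (-(dist u v) ^ 2 / (4 * r))

lemma hK_nonneg (hr : 0 ≤ r) (u v : EuclideanSpace ℝ (Fin d)) : 0 ≤ hK d r u v :=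
  mul_nonneg (Real.rpow_nonneg (by positivity) _) (Real.exp_nonneg _)

lemma hK_zero (hd : 0 < d) (u v : EuclideanSpace ℝ (Fin d)) : hK d 0 u v = 0 := by
  have h2 : -(d:ℝ)/2 ≠ 0 := by
    have : (0:ℝ) < d := by exact_mod_cast hd
    simp only [ne_eq, div_eq_zero_iff, neg_eq_zero]
    push_neg
    constructor
    · intro h; rw [h] at this; exact lt_irrefl _ this
    · norm_num
  simp [hK, Real.zero_rpow h2]

lemma gauss_integrable {b : ℝ} (hb : 0 < b) :
    Integrable (fun v : EuclideanSpace ℝ (Fin d) => Real.exp (-‖v‖ ^ 2 / b)) := by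
  have h := (GaussianFourier.integrable_cexp_neg_mul_sq_norm_add
    (V := EuclideanSpace ℝ (Fin d)) (b := ((1/b : ℝ) : ℂ))
    (by simpa using one_div_pos.2 hb) 0 0).norm
  refine h.congr ?_
  filter_upwards with v
  rw [Complex.norm_exp]
  congr 1
  simp only [zero_mul, add_zero]
  have h2 : -((1 / b : ℝ) : ℂ) * (‖v‖ : ℂ) ^ 2 = (((-‖v‖ ^ 2 / b) : ℝ) : ℂ) := by
    push_cast; ring
  rw [h2, Complex.ofReal_re]

lemma gauss_integral {b : ℝ} (hb : 0 < b) :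
    ∫ v : EuclideanSpace ℝ (Fin d), Real.exp (-‖v‖ ^ 2 / b) = (Real.pi * b) ^ ((d:ℝ)/2) := by
  have h := GaussianFourier.integral_rexp_neg_mul_sq_norm
    (V := EuclideanSpace ℝ (Fin d)) (b := 1/b) (one_div_pos.2 hb)
  rw [finrank_euclideanSpace_fin] at h
  have h2 : ∀ v : EuclideanSpace ℝ (Fin d), -‖v‖^2 / b = -(1/b) * ‖v‖^2 := by
    intro v; field_simp
  simp_rw [h2, h]
  congr 1
  field_simp

lemma hK_integral_right (hr : 0 < r) (u : EuclideanSpace ℝ (Fin d)) :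
    ∫ v, hK d r u v = 1 := by
  unfold hK
  rw [MeasureTheory.integral_const_mul]
  have h1 : ∀ v : EuclideanSpace ℝ (Fin d),
      Real.exp (-(dist u v) ^ 2 / (4 * r)) = Real.exp (-‖u - v‖ ^ 2 / (4*r)) := by
    intro v; rw [dist_eq_norm]
  simp_rw [h1]
  rw [integral_sub_left_eq_self (fun w : EuclideanSpace ℝ (Fin d) =>
    Real.exp (-‖w‖ ^ 2 / (4*r))) volume u]
  rw [gauss_integral (by positivity)]
  rw [show Real.pi * (4*r) = 4 * Real.pi * r from by ring,
      ← Real.rpow_add (by positivity : (0:ℝ) < 4*Real.pi*r),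
      show -(d:ℝ)/2 + (d:ℝ)/2 = 0 from by ring, Real.rpow_zero]

lemma hK_symm (r : ℝ) (u v : EuclideanSpace ℝ (Fin d)) : hK d r u v = hK d r v u := by
  unfold hK; rw [dist_comm]

lemma hK_integral_left (hr : 0 < r) (v : EuclideanSpace ℝ (Fin d)) :
    ∫ u, hK d r u v = 1 := by
  simp_rw [hK_symm (d := d) r _ v]
  exact hK_integral_right hr v

lemma hK_integrable_right (hr : 0 < r) (u : EuclideanSpace ℝ (Fin d)) :
    Integrable (fun v => hK d r u v) := by
  unfold hK
  apply Integrable.const_mul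
  have h1 : ∀ v : EuclideanSpace ℝ (Fin d),
      Real.exp (-(dist u v) ^ 2 / (4 * r)) = Real.exp (-‖u - v‖ ^ 2 / (4*r)) := by
    intro v; rw [dist_eq_norm]
  simp_rw [h1]
  have := (gauss_integrable (d := d) (by positivity : (0:ℝ) < 4*r)).comp_sub_left u
  exact this

lemma hK_integrable_left (hr : 0 < r) (v : EuclideanSpace ℝ (Fin d)) :
    Integrable (fun u => hK d r u v) := by
  simp_rw [hK_symm (d := d) r _ v]
  exact hK_integrable_right hr v

lemma hK_continuous (r : ℝ) :
    Continuous (fun p : EuclideanSpace ℝ (Fin d) × EuclideanSpace ℝ (Fin d) => hK d r p.1 p.2) := by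
  unfold hK
  exact continuous_const.mul
    (((continuous_dist.pow 2).neg.div_const _).rexp)

lemma hK_joint_measurable (t₀ : ℝ) :
    Measurable (fun p : (EuclideanSpace ℝ (Fin d) × ℝ) × EuclideanSpace ℝ (Fin d) =>
      hK d (t₀ - p.1.2) p.1.1 p.2) := by
  unfold hK
  apply Measurable.mul
  · exact (measurable_rpow_const_aux (-(d:ℝ)/2)).comp
      (measurable_const.mul (measurable_const.sub (measurable_snd.comp measurable_fst)))
  · apply Real.measurable_exp.comp
    apply Measurable.div
    · exact ((measurable_dist.comp
        ((measurable_fst.comp measurable_fst).prodMk measurable_snd)).pow_const 2).neg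
    · exact measurable_const.mul (measurable_const.sub (measurable_snd.comp measurable_fst))

end Kernel

section Op

open MeasureTheory Real Set

variable {d : ℕ} {r : ℝ}

lemma A2_integrand_integrable (hr : 0 < r) {h : EuclideanSpace ℝ (Fin d) → ℝ}
    (hm : AEStronglyMeasurable h volume) {C : ℝ} (hb : ∀ v, |h v| ≤ C)
    (u : EuclideanSpace ℝ (Fin d)) :
    Integrable (fun v => hK d r u v * h v) := by
  have h2 := (hK_integrable_right hr u).bdd_mul (c := C) hm (ae_of_all _ fun v => by simpa using hb v)
  exact h2.congr (ae_of_all _ fun v => mul_comm (h v) (hK d r u v))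

lemma A2_sm (r : ℝ) {h : EuclideanSpace ℝ (Fin d) → ℝ} (hm : Measurable h) :
    StronglyMeasurable (fun u : EuclideanSpace ℝ (Fin d) => ∫ v, hK d r u v * h v) := by
  have hj : StronglyMeasurable
      (fun p : EuclideanSpace ℝ (Fin d) × EuclideanSpace ℝ (Fin d) =>
        hK d r p.1 p.2 * h p.2) :=
    (((hK_continuous r).measurable).mul (hm.comp measurable_snd)).stronglyMeasurable
  exact hj.integral_prod_right'

lemma A2_nonneg (hr : 0 ≤ r) {h : EuclideanSpace ℝ (Fin d) → ℝ} (hnn : ∀ v, 0 ≤ h v)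
    (u : EuclideanSpace ℝ (Fin d)) : 0 ≤ ∫ v, hK d r u v * h v :=
  integral_nonneg fun v => mul_nonneg (hK_nonneg hr u v) (hnn v)

lemma A2_abs_le (hr : 0 ≤ r) {h : EuclideanSpace ℝ (Fin d) → ℝ}
    (u : EuclideanSpace ℝ (Fin d)) :
    |∫ v, hK d r u v * h v| ≤ ∫ v, hK d r u v * |h v| := by
  rw [← Real.norm_eq_abs]
  refine (MeasureTheory.norm_integral_le_integral_norm _).trans ?_
  refine le_of_eq (integral_congr_ae (ae_of_all _ fun v => ?_))
  show ‖hK d r u v * h v‖ = hK d r u v * |h v|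
  rw [Real.norm_eq_abs, abs_mul, abs_of_nonneg (hK_nonneg hr u v)]

lemma A2_le_const (hr : 0 < r) {h : EuclideanSpace ℝ (Fin d) → ℝ}
    (hm : AEStronglyMeasurable h volume) {C : ℝ} (hb : ∀ v, |h v| ≤ C)
    (u : EuclideanSpace ℝ (Fin d)) :
    |∫ v, hK d r u v * h v| ≤ C := by
  have hC : 0 ≤ C := (abs_nonneg _).trans (hb 0)
  refine (A2_abs_le hr.le u).trans ?_
  have h1 : ∫ v, hK d r u v * |h v| ≤ ∫ v, hK d r u v * C := by
    refine integral_mono_of_nonneg (ae_of_all _ fun v => ?_)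
      ((hK_integrable_right hr u).mul_const C) (ae_of_all _ fun v => ?_)
    · exact mul_nonneg (hK_nonneg hr.le u v) (abs_nonneg _)
    · exact mul_le_mul_of_nonneg_left (hb v) (hK_nonneg hr.le u v)
  refine h1.trans ?_
  rw [MeasureTheory.integral_mul_const, hK_integral_right hr u, one_mul]

lemma A2_identity (hr : 0 < r) {h : EuclideanSpace ℝ (Fin d) → ℝ} (hm : Measurable h)
    {C : ℝ} (hb : ∀ v, |h v| ≤ C) (hnn : ∀ v, 0 ≤ h v) :
    ∫⁻ u, ENNReal.ofReal (∫ v, hK d r u v * h v) = ∫⁻ v, ENNReal.ofReal (h v) := by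
  have h1 : ∀ u : EuclideanSpace ℝ (Fin d), ENNReal.ofReal (∫ v, hK d r u v * h v)
      = ∫⁻ v, ENNReal.ofReal (hK d r u v * h v) := fun u =>
    ofReal_integral_eq_lintegral_ofReal
      (A2_integrand_integrable hr hm.aestronglyMeasurable hb u)
      (ae_of_all _ fun v => mul_nonneg (hK_nonneg hr.le u v) (hnn v))
  simp_rw [h1]
  rw [lintegral_lintegral_swap]
  · refine lintegral_congr fun v => ?_
    calc ∫⁻ u, ENNReal.ofReal (hK d r u v * h v)
        = ∫⁻ u, ENNReal.ofReal (hK d r u v) * ENNReal.ofReal (h v) := by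
          refine lintegral_congr fun u => ?_
          rw [ENNReal.ofReal_mul (hK_nonneg hr.le u v)]
      _ = (∫⁻ u, ENNReal.ofReal (hK d r u v)) * ENNReal.ofReal (h v) := by
          refine lintegral_mul_const'' _ ?_
          exact (ENNReal.measurable_ofReal.comp
            ((hK_continuous r).measurable.comp
              (measurable_id.prodMk measurable_const))).aemeasurable
      _ = 1 * ENNReal.ofReal (h v) := by
          rw [← ofReal_integral_eq_lintegral_ofReal (hK_integrable_left hr v)
            (ae_of_all _ fun u => hK_nonneg hr.le u v), hK_integral_left hr v,
            ENNReal.ofReal_one]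
      _ = ENNReal.ofReal (h v) := one_mul _
  · exact (ENNReal.measurable_ofReal.comp
      (((hK_continuous r).measurable).mul (hm.comp measurable_snd))).aemeasurable

variable {t₀ : ℝ}

lemma A1_g_sm (t₀ : ℝ) {h : EuclideanSpace ℝ (Fin d) × ℝ → ℝ} (hm : Measurable h) :
    StronglyMeasurable
      (fun p : EuclideanSpace ℝ (Fin d) × ℝ => ∫ v, hK d (t₀ - p.2) p.1 v * h (v, p.2)) := by
  have hj : StronglyMeasurable
      (fun q : (EuclideanSpace ℝ (Fin d) × ℝ) × EuclideanSpace ℝ (Fin d) =>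
        hK d (t₀ - q.1.2) q.1.1 q.2 * h (q.2, q.1.2)) := by
    refine Measurable.stronglyMeasurable ?_
    exact (hK_joint_measurable t₀).mul
      (hm.comp (measurable_snd.prodMk (measurable_snd.comp measurable_fst)))
  exact hj.integral_prod_right'

lemma A1_g_nonneg {h : EuclideanSpace ℝ (Fin d) × ℝ → ℝ} (hnn : ∀ p, 0 ≤ h p)
    (u : EuclideanSpace ℝ (Fin d)) {s : ℝ} (hs : s ≤ t₀) :
    0 ≤ ∫ v, hK d (t₀ - s) u v * h (v, s) :=
  integral_nonneg fun v => mul_nonneg (hK_nonneg (by linarith) u v) (hnn _)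

lemma A1_g_abs_le_const (hd : 0 < d) {h : EuclideanSpace ℝ (Fin d) × ℝ → ℝ}
    (hm : Measurable h) {C : ℝ} (hb : ∀ p, |h p| ≤ C)
    (u : EuclideanSpace ℝ (Fin d)) {s : ℝ} (hs : s ≤ t₀) :
    |∫ v, hK d (t₀ - s) u v * h (v, s)| ≤ C := by
  have hC : 0 ≤ C := (abs_nonneg _).trans (hb (u, s))
  rcases eq_or_lt_of_le hs with hst | hst
  · have : ∀ v, hK d (t₀ - s) u v * h (v, s) = 0 := by
      intro v
      rw [← hst, sub_self, hK_zero hd, zero_mul]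
    simp only [this, integral_zero, abs_zero]
    exact hC
  · exact A2_le_const (by linarith) ((hm.comp (measurable_id.prodMk
      measurable_const)).aestronglyMeasurable) (fun v => hb (v, s)) u

lemma A1_g_integrable (hd : 0 < d) (ht₀ : 0 < t₀) {h : EuclideanSpace ℝ (Fin d) × ℝ → ℝ}
    (hm : Measurable h) {C : ℝ} (hb : ∀ p, |h p| ≤ C) (u : EuclideanSpace ℝ (Fin d)) :
    Integrable (fun s => ∫ v, hK d (t₀ - s) u v * h (v, s))
      (volume.restrict (Set.Ioc 0 t₀)) := by
  refine Integrable.mono' (integrable_const C) ?_ ?_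
  · exact ((A1_g_sm t₀ hm).comp_measurable
      (measurable_const.prodMk measurable_id)).aestronglyMeasurable
  · rw [ae_restrict_iff' measurableSet_Ioc]
    exact ae_of_all _ fun s hs => by
      rw [Real.norm_eq_abs]; exact A1_g_abs_le_const hd hm hb u hs.2

lemma A1_sm (hd : 0 < d) (t₀ : ℝ) {h : EuclideanSpace ℝ (Fin d) × ℝ → ℝ} (hm : Measurable h) :
    StronglyMeasurable
      (fun u : EuclideanSpace ℝ (Fin d) =>
        ∫ s in Set.Ioc 0 t₀, ∫ v, hK d (t₀ - s) u v * h (v, s)) :=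
  (A1_g_sm t₀ hm).integral_prod_right'

lemma A1_identity (hd : 0 < d) (ht₀ : 0 < t₀) {h : EuclideanSpace ℝ (Fin d) × ℝ → ℝ}
    (hm : Measurable h) {C : ℝ} (hb : ∀ p, |h p| ≤ C) (hnn : ∀ p, 0 ≤ h p) :
    ∫⁻ u, ENNReal.ofReal (∫ s in Set.Ioc 0 t₀, ∫ v, hK d (t₀ - s) u v * h (v, s))
      = ∫⁻ v, ∫⁻ s in Set.Ioc 0 t₀, ENNReal.ofReal (h (v, s)) := by
  have h1 : ∀ u : EuclideanSpace ℝ (Fin d),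
      ENNReal.ofReal (∫ s in Set.Ioc 0 t₀, ∫ v, hK d (t₀ - s) u v * h (v, s))
      = ∫⁻ s in Set.Ioc 0 t₀, ENNReal.ofReal (∫ v, hK d (t₀ - s) u v * h (v, s)) := by
    intro u
    refine ofReal_integral_eq_lintegral_ofReal (A1_g_integrable hd ht₀ hm hb u) ?_
    have hae : ∀ᵐ s ∂(volume.restrict (Set.Ioc 0 t₀)),
        0 ≤ ∫ v, hK d (t₀ - s) u v * h (v, s) := by
      rw [ae_restrict_iff' measurableSet_Ioc]
      exact ae_of_all _ fun s hs => A1_g_nonneg hnn u hs.2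
    exact hae
  simp_rw [h1]
  rw [lintegral_lintegral_swap]
  · have h2 : ∫⁻ s in Set.Ioc 0 t₀, ∫⁻ u, ENNReal.ofReal (∫ v, hK d (t₀ - s) u v * h (v, s))
        = ∫⁻ s in Set.Ioc 0 t₀, ∫⁻ v, ENNReal.ofReal (h (v, s)) := by
      rw [← Measure.restrict_congr_set Ioo_ae_eq_Ioc]
      refine setLIntegral_congr_fun measurableSet_Ioo (fun s hs => ?_)
      exact A2_identity (by linarith [hs.2] : (0:ℝ) < t₀ - s)
        (hm.comp (measurable_id.prodMk measurable_const)) (fun v => hb (v, s))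
        (fun v => hnn (v, s))
    rw [h2]
    rw [lintegral_lintegral_swap]
    exact (ENNReal.measurable_ofReal.comp
      (hm.comp (measurable_snd.prodMk measurable_fst))).aemeasurable
  · exact (ENNReal.measurable_ofReal.comp ((A1_g_sm t₀ hm).measurable)).aemeasurable

end Op

section Master

open MeasureTheory Real Set intervalIntegral

variable {d : ℕ} {t₀ : ℝ}

lemma S1_abs_le (hd : 0 < d) (ht₀ : 0 < t₀) {p : EuclideanSpace ℝ (Fin d) × ℝ → ℝ}
    (hpm : Measurable p) {C₁ : ℝ} (hpb : ∀ x, |p x| ≤ C₁) (u : EuclideanSpace ℝ (Fin d)) :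
    |∫ s in Set.Ioc 0 t₀, ∫ v, hK d (t₀ - s) u v * p (v, s)|
      ≤ ∫ s in Set.Ioc 0 t₀, ∫ v, hK d (t₀ - s) u v * |p (v, s)| := by
  have habs : ∀ x, |(fun x => |p x|) x| ≤ C₁ := fun x => by rw [abs_abs]; exact hpb x
  rw [← Real.norm_eq_abs]
  refine (MeasureTheory.norm_integral_le_integral_norm _).trans ?_
  refine integral_mono_of_nonneg (ae_of_all _ fun s => norm_nonneg _)
    (A1_g_integrable hd ht₀ hpm.abs habs u) ?_
  have : ∀ᵐ s ∂(volume.restrict (Set.Ioc 0 t₀)),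
      ‖∫ v, hK d (t₀ - s) u v * p (v, s)‖ ≤ ∫ v, hK d (t₀ - s) u v * |p (v, s)| := by
    rw [ae_restrict_iff' measurableSet_Ioc]
    refine ae_of_all _ fun s hs => ?_
    rw [Real.norm_eq_abs]
    exact A2_abs_le (by linarith [hs.2] : (0:ℝ) ≤ t₀ - s) u
  exact this

lemma err_le (hd : 0 < d) (ht₀ : 0 < t₀) {p : EuclideanSpace ℝ (Fin d) × ℝ → ℝ}
    {q : EuclideanSpace ℝ (Fin d) → ℝ} (hpm : Measurable p) (hqm : Measurable q)
    {C₁ C₂ : ℝ} (hpb : ∀ x, |p x| ≤ C₁) (hqb : ∀ v, |q v| ≤ C₂) :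
    eLpNorm (fun u => (∫ s in Set.Ioc (0:ℝ) t₀, ∫ v, hK d (t₀ - s) u v * p (v, s))
        + ∫ v, hK d t₀ u v * q v) 1 volume
      ≤ (∫⁻ v, ∫⁻ s in Set.Ioc 0 t₀, ENNReal.ofReal |p (v, s)|)
        + ∫⁻ v, ENNReal.ofReal |q v| := by
  have habs : ∀ x, |(fun x => |p x|) x| ≤ C₁ := fun x => by rw [abs_abs]; exact hpb x
  have hqabs : ∀ v, |(fun v => |q v|) v| ≤ C₂ := fun v => by rw [abs_abs]; exact hqb v
  rw [eLpNorm_one_eq_lintegral_enorm]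
  have step1 : ∫⁻ u, (‖(∫ s in Set.Ioc (0:ℝ) t₀, ∫ v, hK d (t₀ - s) u v * p (v, s))
        + ∫ v, hK d t₀ u v * q v‖₊ : ℝ≥0∞)
      ≤ ∫⁻ u, (ENNReal.ofReal (∫ s in Set.Ioc (0:ℝ) t₀, ∫ v, hK d (t₀ - s) u v * |p (v, s)|)
          + ENNReal.ofReal (∫ v, hK d t₀ u v * |q v|)) := by
    refine lintegral_mono fun u => ?_
    rw [← enorm_eq_nnnorm, ← ofReal_norm]
    refine le_trans (ENNReal.ofReal_le_ofReal ?_) ENNReal.ofReal_add_le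
    refine (norm_add_le _ _).trans ?_
    gcongr
    · rw [Real.norm_eq_abs]
      exact S1_abs_le hd ht₀ hpm hpb u
    · rw [Real.norm_eq_abs]
      exact A2_abs_le ht₀.le u
  refine step1.trans (le_of_eq ?_)
  rw [lintegral_add_left']
  · congr 1
    · exact A1_identity hd ht₀ hpm.abs habs (fun x => abs_nonneg _)
    · exact A2_identity ht₀ hqm.abs hqabs (fun v => abs_nonneg _)
  · exact (ENNReal.measurable_ofReal.comp (A1_sm hd t₀ hpm.abs).measurable).aemeasurable

lemma err_eq (hd : 0 < d) (ht₀ : 0 < t₀) {p : EuclideanSpace ℝ (Fin d) × ℝ → ℝ}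
    {q : EuclideanSpace ℝ (Fin d) → ℝ} (hpm : Measurable p) (hqm : Measurable q)
    {C₁ C₂ : ℝ} (hpb : ∀ x, |p x| ≤ C₁) (hqb : ∀ v, |q v| ≤ C₂)
    (hpn : ∀ x, 0 ≤ p x) (hqn : ∀ v, 0 ≤ q v) :
    eLpNorm (fun u => (∫ s in Set.Ioc (0:ℝ) t₀, ∫ v, hK d (t₀ - s) u v * p (v, s))
        + ∫ v, hK d t₀ u v * q v) 1 volume
      = (∫⁻ v, ∫⁻ s in Set.Ioc 0 t₀, ENNReal.ofReal (p (v, s)))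
        + ∫⁻ v, ENNReal.ofReal (q v) := by
  rw [eLpNorm_one_eq_lintegral_enorm]
  simp only [enorm_eq_nnnorm]
  have h1 : ∀ u : EuclideanSpace ℝ (Fin d),
      (‖(∫ s in Set.Ioc (0:ℝ) t₀, ∫ v, hK d (t₀ - s) u v * p (v, s))
        + ∫ v, hK d t₀ u v * q v‖₊ : ℝ≥0∞)
      = ENNReal.ofReal (∫ s in Set.Ioc (0:ℝ) t₀, ∫ v, hK d (t₀ - s) u v * p (v, s))
        + ENNReal.ofReal (∫ v, hK d t₀ u v * q v) := by
    intro u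
    have h1a : 0 ≤ ∫ s in Set.Ioc (0:ℝ) t₀, ∫ v, hK d (t₀ - s) u v * p (v, s) :=
      setIntegral_nonneg measurableSet_Ioc fun s hs => A1_g_nonneg hpn u hs.2
    have h1b : 0 ≤ ∫ v, hK d t₀ u v * q v := A2_nonneg ht₀.le hqn u
    rw [← enorm_eq_nnnorm, ← ofReal_norm, Real.norm_eq_abs, abs_of_nonneg (add_nonneg h1a h1b),
      ENNReal.ofReal_add h1a h1b]
  simp_rw [h1]
  rw [lintegral_add_left']
  · congr 1
    · exact A1_identity hd ht₀ hpm hpb hpn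
    · exact A2_identity ht₀ hqm hqb hqn
  · exact (ENNReal.measurable_ofReal.comp (A1_sm hd t₀ hpm).measurable).aemeasurable

lemma lint_support_fin {p : EuclideanSpace ℝ (Fin d) × ℝ → ℝ} {C₁ R₁ : ℝ}
    (hC : 0 ≤ C₁) (hpb : ∀ x, |p x| ≤ C₁) (hpR : ∀ x, p x ≠ 0 → ‖x.1‖ ≤ R₁) :
    (∫⁻ v, ∫⁻ s in Set.Ioc 0 t₀, ENNReal.ofReal |p (v, s)|) < ⊤ := by
  have hle : ∀ v : EuclideanSpace ℝ (Fin d),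
      (∫⁻ s in Set.Ioc 0 t₀, ENNReal.ofReal |p (v, s)|)
      ≤ (Metric.closedBall (0 : EuclideanSpace ℝ (Fin d)) R₁).indicator
          (fun _ => ENNReal.ofReal C₁ * volume (Set.Ioc (0:ℝ) t₀)) v := by
    intro v
    by_cases hv : v ∈ Metric.closedBall (0 : EuclideanSpace ℝ (Fin d)) R₁
    · rw [Set.indicator_of_mem hv]
      calc ∫⁻ s in Set.Ioc 0 t₀, ENNReal.ofReal |p (v, s)|
          ≤ ∫⁻ _ in Set.Ioc (0:ℝ) t₀, ENNReal.ofReal C₁ :=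
            lintegral_mono fun s => ENNReal.ofReal_le_ofReal (hpb _)
        _ = ENNReal.ofReal C₁ * volume (Set.Ioc (0:ℝ) t₀) := by
            rw [setLIntegral_const]
    · rw [Set.indicator_of_notMem hv]
      have hz : ∀ s, p (v, s) = 0 := by
        intro s
        by_contra hne
        exact hv (Metric.mem_closedBall.2 (by
          rw [dist_zero_right]; exact hpR (v, s) hne))
      simp [hz]
  calc (∫⁻ v, ∫⁻ s in Set.Ioc 0 t₀, ENNReal.ofReal |p (v, s)|)
      ≤ ∫⁻ v, (Metric.closedBall (0 : EuclideanSpace ℝ (Fin d)) R₁).indicator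
          (fun _ => ENNReal.ofReal C₁ * volume (Set.Ioc (0:ℝ) t₀)) v := lintegral_mono hle
    _ = ENNReal.ofReal C₁ * volume (Set.Ioc (0:ℝ) t₀)
          * volume (Metric.closedBall (0 : EuclideanSpace ℝ (Fin d)) R₁) := by
        rw [lintegral_indicator Metric.isClosed_closedBall.measurableSet, setLIntegral_const]
    _ < ⊤ := by
        refine ENNReal.mul_lt_top (ENNReal.mul_lt_top ENNReal.ofReal_lt_top ?_) ?_
        · rw [Real.volume_Ioc]; exact ENNReal.ofReal_lt_top
        · exact measure_closedBall_lt_top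

lemma lint_support_fin2 {q : EuclideanSpace ℝ (Fin d) → ℝ} {C₂ R₂ : ℝ}
    (hC : 0 ≤ C₂) (hqb : ∀ v, |q v| ≤ C₂) (hqR : ∀ v, q v ≠ 0 → ‖v‖ ≤ R₂) :
    (∫⁻ v, ENNReal.ofReal |q v|) < ⊤ := by
  have hle : ∀ v : EuclideanSpace ℝ (Fin d),
      ENNReal.ofReal |q v|
      ≤ (Metric.closedBall (0 : EuclideanSpace ℝ (Fin d)) R₂).indicator
          (fun _ => ENNReal.ofReal C₂) v := by
    intro v
    by_cases hv : v ∈ Metric.closedBall (0 : EuclideanSpace ℝ (Fin d)) R₂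
    · rw [Set.indicator_of_mem hv]; exact ENNReal.ofReal_le_ofReal (hqb v)
    · rw [Set.indicator_of_notMem hv]
      have hz : q v = 0 := by
        by_contra hne
        exact hv (Metric.mem_closedBall.2 (by rw [dist_zero_right]; exact hqR v hne))
      simp [hz]
  calc (∫⁻ v, ENNReal.ofReal |q v|)
      ≤ ∫⁻ v, (Metric.closedBall (0 : EuclideanSpace ℝ (Fin d)) R₂).indicator
          (fun _ => ENNReal.ofReal C₂) v := lintegral_mono hle
    _ = ENNReal.ofReal C₂ * volume (Metric.closedBall (0 : EuclideanSpace ℝ (Fin d)) R₂) := by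
        rw [lintegral_indicator Metric.isClosed_closedBall.measurableSet, setLIntegral_const]
    _ < ⊤ := ENNReal.mul_lt_top ENNReal.ofReal_lt_top measure_closedBall_lt_top

end Master

section Master2

open MeasureTheory Real Set intervalIntegral

variable {d : ℕ} {t₀ : ℝ}

lemma S1_sub (hd : 0 < d) (ht₀ : 0 < t₀) {f h : EuclideanSpace ℝ (Fin d) × ℝ → ℝ}
    (hfm : Measurable f) (hhm : Measurable h) {Cf Ch : ℝ}
    (hfb : ∀ x, |f x| ≤ Cf) (hhb : ∀ x, |h x| ≤ Ch) (u : EuclideanSpace ℝ (Fin d)) :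
    (∫ s in Set.Ioc (0:ℝ) t₀, ∫ v, hK d (t₀ - s) u v * f (v, s))
      - (∫ s in Set.Ioc (0:ℝ) t₀, ∫ v, hK d (t₀ - s) u v * h (v, s))
      = ∫ s in Set.Ioc (0:ℝ) t₀, ∫ v, hK d (t₀ - s) u v * (f (v, s) - h (v, s)) := by
  rw [← integral_sub (A1_g_integrable hd ht₀ hfm hfb u) (A1_g_integrable hd ht₀ hhm hhb u)]
  refine setIntegral_congr_fun measurableSet_Ioc fun s hs => ?_
  rcases eq_or_lt_of_le hs.2 with hst | hst
  · have h0 : t₀ - s = 0 := by rw [hst, sub_self]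
    rw [h0]
    simp [hK_zero hd]
  · rw [← integral_sub
      (A2_integrand_integrable (h := fun v => f (v, s)) (by linarith : (0:ℝ) < t₀ - s)
        ((hfm.comp (measurable_id.prodMk measurable_const)).aestronglyMeasurable)
        (fun v => hfb (v, s)) u)
      (A2_integrand_integrable (h := fun v => h (v, s)) (by linarith : (0:ℝ) < t₀ - s)
        ((hhm.comp (measurable_id.prodMk measurable_const)).aestronglyMeasurable)
        (fun v => hhb (v, s)) u)]
    refine integral_congr_ae (ae_of_all _ fun v => ?_)
    show hK d (t₀ - s) u v * f (v, s) - hK d (t₀ - s) u v * h (v, s)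
      = hK d (t₀ - s) u v * (f (v, s) - h (v, s))
    ring

lemma A2_sub (ht₀ : 0 < t₀) {g h : EuclideanSpace ℝ (Fin d) → ℝ}
    (hgm : Measurable g) (hhm : Measurable h) {Cg Ch : ℝ}
    (hgb : ∀ v, |g v| ≤ Cg) (hhb : ∀ v, |h v| ≤ Ch) (u : EuclideanSpace ℝ (Fin d)) :
    (∫ v, hK d t₀ u v * g v) - (∫ v, hK d t₀ u v * h v)
      = ∫ v, hK d t₀ u v * (g v - h v) := by
  rw [← integral_sub (A2_integrand_integrable ht₀ hgm.aestronglyMeasurable hgb u)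
    (A2_integrand_integrable ht₀ hhm.aestronglyMeasurable hhb u)]
  refine integral_congr_ae (ae_of_all _ fun v => ?_)
  show hK d t₀ u v * g v - hK d t₀ u v * h v = hK d t₀ u v * (g v - h v)
  ring

lemma sum_AESM (hd : 0 < d) (ht₀ : 0 < t₀) {p : EuclideanSpace ℝ (Fin d) × ℝ → ℝ}
    {q : EuclideanSpace ℝ (Fin d) → ℝ} (hpm : Measurable p) (hqm : Measurable q) :
    AEStronglyMeasurable
      (fun u : EuclideanSpace ℝ (Fin d) =>
        (∫ s in (0:ℝ)..t₀, ∫ v, hK d (t₀ - s) u v * p (v, s)) + ∫ v, hK d t₀ u v * q v)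
      volume := by
  have heq : (fun u : EuclideanSpace ℝ (Fin d) =>
      (∫ s in (0:ℝ)..t₀, ∫ v, hK d (t₀ - s) u v * p (v, s)) + ∫ v, hK d t₀ u v * q v)
      = fun u => (∫ s in Set.Ioc (0:ℝ) t₀, ∫ v, hK d (t₀ - s) u v * p (v, s))
          + ∫ v, hK d t₀ u v * q v := by
    funext u
    rw [intervalIntegral.integral_of_le ht₀.le]
  rw [heq]
  exact ((A1_sm hd t₀ hpm).add (A2_sm t₀ hqm)).aestronglyMeasurable

lemma memLp_sum (hd : 0 < d) (ht₀ : 0 < t₀) {p : EuclideanSpace ℝ (Fin d) × ℝ → ℝ}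
    {q : EuclideanSpace ℝ (Fin d) → ℝ} (hpm : Measurable p) (hqm : Measurable q)
    {C₁ C₂ R₁ R₂ : ℝ} (hpb : ∀ x, |p x| ≤ C₁) (hqb : ∀ v, |q v| ≤ C₂)
    (hpR : ∀ x, p x ≠ 0 → ‖x.1‖ ≤ R₁) (hqR : ∀ v, q v ≠ 0 → ‖v‖ ≤ R₂) :
    MemLp (fun u : EuclideanSpace ℝ (Fin d) =>
      (∫ s in (0:ℝ)..t₀, ∫ v, hK d (t₀ - s) u v * p (v, s)) + ∫ v, hK d t₀ u v * q v)
      1 volume := by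
  have hC₁ : 0 ≤ C₁ := (abs_nonneg _).trans (hpb 0)
  have hC₂ : 0 ≤ C₂ := (abs_nonneg _).trans (hqb 0)
  refine ⟨sum_AESM hd ht₀ hpm hqm, ?_⟩
  have heq : (fun u : EuclideanSpace ℝ (Fin d) =>
      (∫ s in (0:ℝ)..t₀, ∫ v, hK d (t₀ - s) u v * p (v, s)) + ∫ v, hK d t₀ u v * q v)
      = fun u => (∫ s in Set.Ioc (0:ℝ) t₀, ∫ v, hK d (t₀ - s) u v * p (v, s))
          + ∫ v, hK d t₀ u v * q v := by
    funext u
    rw [intervalIntegral.integral_of_le ht₀.le]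
  rw [heq]
  refine lt_of_le_of_lt (err_le hd ht₀ hpm hqm hpb hqb) ?_
  exact ENNReal.add_lt_top.2 ⟨lint_support_fin hC₁ hpb hpR, lint_support_fin2 hC₂ hqb hqR⟩

/-- The error functional of a method `Φ`. -/
noncomputable def ErrF (d : ℕ) (t₀ : ℝ) {n₁ n₂ : ℕ} (ω₁ ω₂ : ℝ → ℝ)
    (M₁ : Set (EuclideanSpace ℝ (Fin d) × ℝ)) (M₂ : Set (EuclideanSpace ℝ (Fin d)))
    (q₁ : Fin n₁ → EuclideanSpace ℝ (Fin d) × ℝ) (q₂ : Fin n₂ → EuclideanSpace ℝ (Fin d))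
    (e₁ : Fin n₁ → ℝ) (e₂ : Fin n₂ → ℝ)
    (Φ : (Fin n₁ → ℝ) × (Fin n₂ → ℝ) → EuclideanSpace ℝ (Fin d) → ℝ) : ℝ≥0∞ :=
  ⨆ f ∈ HtildeOR ω₁ M₁, ⨆ g ∈ HtildeOR ω₂ M₂, ⨆ z : (Fin n₁ → ℝ) × (Fin n₂ → ℝ),
    ⨆ (_ : (∀ j, |z.1 j - f (q₁ j)| ≤ e₁ j) ∧ ∀ j, |z.2 j - g (q₂ j)| ≤ e₂ j),
      eLpNorm (fun u => ((∫ s in (0:ℝ)..t₀, ∫ v, hK d (t₀ - s) u v * f (v, s))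
        + ∫ v, hK d t₀ u v * g v) - Φ z u) 1
        (volume : Measure (EuclideanSpace ℝ (Fin d)))

/-- The optimal method. -/
noncomputable def Phi0F (d : ℕ) (t₀ : ℝ) {n₁ n₂ : ℕ} (ω₁ ω₂ : ℝ → ℝ)
    (M₁ : Set (EuclideanSpace ℝ (Fin d) × ℝ)) (M₂ : Set (EuclideanSpace ℝ (Fin d)))
    (q₁ : Fin n₁ → EuclideanSpace ℝ (Fin d) × ℝ) (q₂ : Fin n₂ → EuclideanSpace ℝ (Fin d))
    (e₁ : Fin n₁ → ℝ) (e₂ : Fin n₂ → ℝ)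
    (z : (Fin n₁ → ℝ) × (Fin n₂ → ℝ)) (u : EuclideanSpace ℝ (Fin d)) : ℝ :=
  (∫ s in (0:ℝ)..t₀, ∫ v, hK d (t₀ - s) u v * LmethTildeOR ω₁ M₁ q₁ e₁ z.1 (v, s))
    + ∫ v, hK d t₀ u v * LmethTildeOR ω₂ M₂ q₂ e₂ z.2 v

lemma le_ErrF {n₁ n₂ : ℕ} {ω₁ ω₂ : ℝ → ℝ}
    {M₁ : Set (EuclideanSpace ℝ (Fin d) × ℝ)} {M₂ : Set (EuclideanSpace ℝ (Fin d))}
    {q₁ : Fin n₁ → EuclideanSpace ℝ (Fin d) × ℝ} {q₂ : Fin n₂ → EuclideanSpace ℝ (Fin d)}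
    {e₁ : Fin n₁ → ℝ} {e₂ : Fin n₂ → ℝ}
    (Φ : (Fin n₁ → ℝ) × (Fin n₂ → ℝ) → EuclideanSpace ℝ (Fin d) → ℝ)
    {f : EuclideanSpace ℝ (Fin d) × ℝ → ℝ} {g : EuclideanSpace ℝ (Fin d) → ℝ}
    {z : (Fin n₁ → ℝ) × (Fin n₂ → ℝ)}
    (hf : f ∈ HtildeOR ω₁ M₁) (hg : g ∈ HtildeOR ω₂ M₂)
    (hcond : (∀ j, |z.1 j - f (q₁ j)| ≤ e₁ j) ∧ ∀ j, |z.2 j - g (q₂ j)| ≤ e₂ j) :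
    eLpNorm (fun u => ((∫ s in (0:ℝ)..t₀, ∫ v, hK d (t₀ - s) u v * f (v, s))
        + ∫ v, hK d t₀ u v * g v) - Φ z u) 1
        (volume : Measure (EuclideanSpace ℝ (Fin d)))
      ≤ ErrF d t₀ ω₁ ω₂ M₁ M₂ q₁ q₂ e₁ e₂ Φ := by
  have h1 := le_iSup (fun _ : ((∀ j, |z.1 j - f (q₁ j)| ≤ e₁ j) ∧
      ∀ j, |z.2 j - g (q₂ j)| ≤ e₂ j) =>
    eLpNorm (fun u => ((∫ s in (0:ℝ)..t₀, ∫ v, hK d (t₀ - s) u v * f (v, s))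
        + ∫ v, hK d t₀ u v * g v) - Φ z u) 1
        (volume : Measure (EuclideanSpace ℝ (Fin d)))) hcond
  have h2 := le_iSup (fun z' : (Fin n₁ → ℝ) × (Fin n₂ → ℝ) =>
    ⨆ (_ : (∀ j, |z'.1 j - f (q₁ j)| ≤ e₁ j) ∧ ∀ j, |z'.2 j - g (q₂ j)| ≤ e₂ j),
      eLpNorm (fun u => ((∫ s in (0:ℝ)..t₀, ∫ v, hK d (t₀ - s) u v * f (v, s))
        + ∫ v, hK d t₀ u v * g v) - Φ z' u) 1
        (volume : Measure (EuclideanSpace ℝ (Fin d)))) z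
  have h3 := le_iSup₂ (f := fun g' (_ : g' ∈ HtildeOR ω₂ M₂) =>
    ⨆ z' : (Fin n₁ → ℝ) × (Fin n₂ → ℝ),
      ⨆ (_ : (∀ j, |z'.1 j - f (q₁ j)| ≤ e₁ j) ∧ ∀ j, |z'.2 j - g' (q₂ j)| ≤ e₂ j),
        eLpNorm (fun u => ((∫ s in (0:ℝ)..t₀, ∫ v, hK d (t₀ - s) u v * f (v, s))
          + ∫ v, hK d t₀ u v * g' v) - Φ z' u) 1
          (volume : Measure (EuclideanSpace ℝ (Fin d)))) g hg
  have h4 := le_iSup₂ (f := fun f' (_ : f' ∈ HtildeOR ω₁ M₁) =>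
    ⨆ g' ∈ HtildeOR ω₂ M₂, ⨆ z' : (Fin n₁ → ℝ) × (Fin n₂ → ℝ),
      ⨆ (_ : (∀ j, |z'.1 j - f' (q₁ j)| ≤ e₁ j) ∧ ∀ j, |z'.2 j - g' (q₂ j)| ≤ e₂ j),
        eLpNorm (fun u => ((∫ s in (0:ℝ)..t₀, ∫ v, hK d (t₀ - s) u v * f' (v, s))
          + ∫ v, hK d t₀ u v * g' v) - Φ z' u) 1
          (volume : Measure (EuclideanSpace ℝ (Fin d)))) f hf
  exact h1.trans (h2.trans (h3.trans h4))

end Master2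

section Final

open MeasureTheory Real Set intervalIntegral Metric

set_option maxHeartbeats 1000000 in
theorem optimal_master (d : ℕ) (hd : 0 < d) (t₀ : ℝ) (ht₀ : 0 < t₀)
    (ω₁ ω₂ : ℝ → ℝ)
    (hω₁0 : ω₁ 0 = 0) (hω₁_cont : ContinuousOn ω₁ (Set.Ici 0))
    (hω₁_mono : MonotoneOn ω₁ (Set.Ici 0))
    (hω₁_subadd : ∀ s t : ℝ, 0 ≤ s → 0 ≤ t → ω₁ (s + t) ≤ ω₁ s + ω₁ t)
    (hω₁_nonneg : ∀ s : ℝ, 0 ≤ s → 0 ≤ ω₁ s)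
    (hω₂0 : ω₂ 0 = 0) (hω₂_cont : ContinuousOn ω₂ (Set.Ici 0))
    (hω₂_mono : MonotoneOn ω₂ (Set.Ici 0))
    (hω₂_subadd : ∀ s t : ℝ, 0 ≤ s → 0 ≤ t → ω₂ (s + t) ≤ ω₂ s + ω₂ t)
    (hω₂_nonneg : ∀ s : ℝ, 0 ≤ s → 0 ≤ ω₂ s)
    (M₁ : Set (EuclideanSpace ℝ (Fin d) × ℝ)) (hM₁ : IsCompact M₁)
    (M₂ : Set (EuclideanSpace ℝ (Fin d))) (hM₂ : IsCompact M₂)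
    {n₁ n₂ : ℕ} (hn₁ : 0 < n₁) (hn₂ : 0 < n₂)
    (q₁ : Fin n₁ → EuclideanSpace ℝ (Fin d) × ℝ) (hq₁ : ∀ j, q₁ j ∈ M₁)
    (q₂ : Fin n₂ → EuclideanSpace ℝ (Fin d)) (hq₂ : ∀ j, q₂ j ∈ M₂)
    (e₁ : Fin n₁ → ℝ) (he₁ : ∀ j, 0 ≤ e₁ j)
    (e₂ : Fin n₂ → ℝ) (he₂ : ∀ j, 0 ≤ e₂ j) :
    (⨅ Φ : {Φ : (Fin n₁ → ℝ) × (Fin n₂ → ℝ) → EuclideanSpace ℝ (Fin d) → ℝ //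
        ∀ z, MemLp (Φ z) 1 (volume : Measure (EuclideanSpace ℝ (Fin d)))},
      ErrF d t₀ ω₁ ω₂ M₁ M₂ q₁ q₂ e₁ e₂ Φ.1)
      = ErrF d t₀ ω₁ ω₂ M₁ M₂ q₁ q₂ e₁ e₂ (Phi0F d t₀ ω₁ ω₂ M₁ M₂ q₁ q₂ e₁ e₂)
    ∧ ErrF d t₀ ω₁ ω₂ M₁ M₂ q₁ q₂ e₁ e₂ (Phi0F d t₀ ω₁ ω₂ M₁ M₂ q₁ q₂ e₁ e₂)
      = (∫⁻ v, ∫⁻ s in Set.Ioc (0:ℝ) t₀,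
          ENNReal.ofReal (tauTildeOR ω₁ M₁ q₁ e₁ (v, s)))
        + ∫⁻ v, ENNReal.ofReal (tauTildeOR ω₂ M₂ q₂ e₂ v) := by
  haveI : Nonempty (Fin d) := ⟨⟨0, hd⟩⟩
  haveI : NoncompactSpace (EuclideanSpace ℝ (Fin d)) := inferInstance
  -- extremal functions
  have hτ₁mem : tauTildeOR ω₁ M₁ q₁ e₁ ∈ HtildeOR ω₁ M₁ :=
    tauTildeOR_mem_Htilde hn₁ hM₁.isClosed hω₁0 hω₁_cont hω₁_mono hω₁_subadd he₁ hω₁_nonneg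
  have hτ₂mem : tauTildeOR ω₂ M₂ q₂ e₂ ∈ HtildeOR ω₂ M₂ :=
    tauTildeOR_mem_Htilde hn₂ hM₂.isClosed hω₂0 hω₂_cont hω₂_mono hω₂_subadd he₂ hω₂_nonneg
  obtain ⟨C₁, hC₁0, hC₁⟩ := Htilde_bounded hM₁ hτ₁mem
  obtain ⟨C₂, hC₂0, hC₂⟩ := Htilde_bounded hM₂ hτ₂mem
  obtain ⟨R₁, hR₁⟩ := hM₁.isBounded.subset_closedBall 0
  obtain ⟨R₂, hR₂⟩ := hM₂.isBounded.subset_closedBall 0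
  have hsupp₁ : ∀ f : EuclideanSpace ℝ (Fin d) × ℝ → ℝ, (∀ x ∉ M₁, f x = 0) →
      ∀ x, f x ≠ 0 → ‖x.1‖ ≤ R₁ := by
    intro f hf x hx
    have hxM : x ∈ M₁ := by by_contra hc; exact hx (hf x hc)
    have h2 := hR₁ hxM
    rw [Metric.mem_closedBall, dist_zero_right] at h2
    exact (norm_fst_le x).trans h2
  have hsupp₂ : ∀ g : EuclideanSpace ℝ (Fin d) → ℝ, (∀ v ∉ M₂, g v = 0) →
      ∀ v, g v ≠ 0 → ‖v‖ ≤ R₂ := by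
    intro g hg v hv
    have hvM : v ∈ M₂ := by by_contra hc; exact hv (hg v hc)
    have h2 := hR₂ hvM
    rwa [Metric.mem_closedBall, dist_zero_right] at h2
  set V : ℝ≥0∞ := (∫⁻ v, ∫⁻ s in Set.Ioc (0:ℝ) t₀,
      ENNReal.ofReal (tauTildeOR ω₁ M₁ q₁ e₁ (v, s)))
    + ∫⁻ v, ENNReal.ofReal (tauTildeOR ω₂ M₂ q₂ e₂ v) with hV
  have habs_sub : ∀ (a b Ca Cb : ℝ), |a| ≤ Ca → |b| ≤ Cb → |a - b| ≤ Ca + Cb :=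
    fun a b Ca Cb ha hb => (abs_sub a b).trans (add_le_add ha hb)
  -- upper bound
  have hUB : ErrF d t₀ ω₁ ω₂ M₁ M₂ q₁ q₂ e₁ e₂ (Phi0F d t₀ ω₁ ω₂ M₁ M₂ q₁ q₂ e₁ e₂) ≤ V := by
    rw [ErrF]
    refine iSup₂_le fun f hf => iSup₂_le fun g hg => iSup_le fun z => iSup_le fun hz => ?_
    obtain ⟨Cf, hCf0, hCf⟩ := Htilde_bounded hM₁ hf
    obtain ⟨Cg, hCg0, hCg⟩ := Htilde_bounded hM₂ hg
    have hL₁m := Lmeth_measurable (q := q₁) (e := e₁) hn₁ hM₁.isClosed hω₁_cont z.1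
    have hL₂m := Lmeth_measurable (q := q₂) (e := e₂) hn₂ hM₂.isClosed hω₂_cont z.2
    have hB₁ := Lmeth_abs_le (ω := ω₁) (M' := M₁) (q := q₁) (e := e₁) hn₁ z.1
    have hB₂ := Lmeth_abs_le (ω := ω₂) (M' := M₂) (q := q₂) (e := e₂) hn₂ z.2
    have heq : (fun u => ((∫ s in (0:ℝ)..t₀, ∫ v, hK d (t₀ - s) u v * f (v, s))
        + ∫ v, hK d t₀ u v * g v) - Phi0F d t₀ ω₁ ω₂ M₁ M₂ q₁ q₂ e₁ e₂ z u)
        = fun u => (∫ s in Set.Ioc (0:ℝ) t₀, ∫ v, hK d (t₀ - s) u v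
              * (f (v, s) - LmethTildeOR ω₁ M₁ q₁ e₁ z.1 (v, s)))
            + ∫ v, hK d t₀ u v * (g v - LmethTildeOR ω₂ M₂ q₂ e₂ z.2 v) := by
      funext u
      simp only [Phi0F]
      rw [integral_of_le ht₀.le, integral_of_le ht₀.le]
      rw [← S1_sub hd ht₀ hf.1.measurable hL₁m hCf hB₁ u,
          ← A2_sub ht₀ hg.1.measurable hL₂m hCg hB₂ u]
      ring
    rw [heq]
    refine le_trans (err_le (p := fun x => f x - LmethTildeOR ω₁ M₁ q₁ e₁ z.1 x)
      (q := fun v => g v - LmethTildeOR ω₂ M₂ q₂ e₂ z.2 v)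
      hd ht₀ (hf.1.measurable.sub hL₁m) (hg.1.measurable.sub hL₂m)
      (fun x => habs_sub _ _ _ _ (hCf x) (hB₁ x))
      (fun v => habs_sub _ _ _ _ (hCg v) (hB₂ v))) ?_
    rw [hV]
    refine add_le_add ?_ ?_
    · refine lintegral_mono fun v => lintegral_mono fun s => ENNReal.ofReal_le_ofReal ?_
      exact method_pointwise_bound hM₁ hn₁ hq₁ hω₁_mono hf hz.1 (v, s)
    · refine lintegral_mono fun v => ENNReal.ofReal_le_ofReal ?_
      exact method_pointwise_bound hM₂ hn₂ hq₂ hω₂_mono hg hz.2 v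
  -- lower bound against an arbitrary method
  have hLB : ∀ Φ : (Fin n₁ → ℝ) × (Fin n₂ → ℝ) → EuclideanSpace ℝ (Fin d) → ℝ,
      AEStronglyMeasurable (Φ (0, 0)) volume →
      V ≤ ErrF d t₀ ω₁ ω₂ M₁ M₂ q₁ q₂ e₁ e₂ Φ := by
    intro Φ hΦsm
    have hτ₁meas : Measurable (tauTildeOR ω₁ M₁ q₁ e₁) := hτ₁mem.1.measurable
    have hτ₂meas : Measurable (tauTildeOR ω₂ M₂ q₂ e₂) := hτ₂mem.1.measurable
    set SS : EuclideanSpace ℝ (Fin d) → ℝ := fun u =>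
      (∫ s in (0:ℝ)..t₀, ∫ v, hK d (t₀ - s) u v * tauTildeOR ω₁ M₁ q₁ e₁ (v, s))
        + ∫ v, hK d t₀ u v * tauTildeOR ω₂ M₂ q₂ e₂ v with hSS
    have hz01 : ∀ j, |(0 : ℝ) - tauTildeOR ω₁ M₁ q₁ e₁ (q₁ j)| ≤ e₁ j := fun j => by
      rw [zero_sub, abs_neg, abs_of_nonneg (tauTildeOR_nonneg hn₁ he₁ hω₁_nonneg _)]
      exact tauTildeOR_at_node hn₁ hω₁0 (hq₁ j)
    have hz02 : ∀ j, |(0 : ℝ) - tauTildeOR ω₂ M₂ q₂ e₂ (q₂ j)| ≤ e₂ j := fun j => by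
      rw [zero_sub, abs_neg, abs_of_nonneg (tauTildeOR_nonneg hn₂ he₂ hω₂_nonneg _)]
      exact tauTildeOR_at_node hn₂ hω₂0 (hq₂ j)
    have hSval : eLpNorm SS 1 volume = V := by
      have heq2 : SS = fun u =>
          (∫ s in Set.Ioc (0:ℝ) t₀, ∫ v, hK d (t₀ - s) u v * tauTildeOR ω₁ M₁ q₁ e₁ (v, s))
            + ∫ v, hK d t₀ u v * tauTildeOR ω₂ M₂ q₂ e₂ v := by
        funext u
        simp only [hSS]
        rw [integral_of_le ht₀.le]
      rw [heq2, hV]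
      exact err_eq hd ht₀ hτ₁meas hτ₂meas hC₁ hC₂
        (tauTildeOR_nonneg hn₁ he₁ hω₁_nonneg) (tauTildeOR_nonneg hn₂ he₂ hω₂_nonneg)
    have hE₁ : eLpNorm (fun u => SS u - Φ (0, 0) u) 1 volume
        ≤ ErrF d t₀ ω₁ ω₂ M₁ M₂ q₁ q₂ e₁ e₂ Φ :=
      le_ErrF Φ hτ₁mem hτ₂mem ⟨hz01, hz02⟩
    have hE₂ : eLpNorm (fun u => SS u + Φ (0, 0) u) 1 volume
        ≤ ErrF d t₀ ω₁ ω₂ M₁ M₂ q₁ q₂ e₁ e₂ Φ := by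
      have hcond1 : ∀ j, |(0 : ℝ) - (fun t => -(tauTildeOR ω₁ M₁ q₁ e₁ t)) (q₁ j)| ≤ e₁ j := by
        intro j
        show |(0 : ℝ) - (-(tauTildeOR ω₁ M₁ q₁ e₁ (q₁ j)))| ≤ e₁ j
        rw [zero_sub, neg_neg, abs_of_nonneg (tauTildeOR_nonneg hn₁ he₁ hω₁_nonneg _)]
        exact tauTildeOR_at_node hn₁ hω₁0 (hq₁ j)
      have hcond2 : ∀ j, |(0 : ℝ) - (fun t => -(tauTildeOR ω₂ M₂ q₂ e₂ t)) (q₂ j)| ≤ e₂ j := by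
        intro j
        show |(0 : ℝ) - (-(tauTildeOR ω₂ M₂ q₂ e₂ (q₂ j)))| ≤ e₂ j
        rw [zero_sub, neg_neg, abs_of_nonneg (tauTildeOR_nonneg hn₂ he₂ hω₂_nonneg _)]
        exact tauTildeOR_at_node hn₂ hω₂0 (hq₂ j)
      have h := le_ErrF (t₀ := t₀) Φ (neg_mem_Htilde hτ₁mem) (neg_mem_Htilde hτ₂mem)
        (z := ((0 : Fin n₁ → ℝ), (0 : Fin n₂ → ℝ))) ⟨hcond1, hcond2⟩
      have hfun : (fun u => ((∫ s in (0:ℝ)..t₀, ∫ v, hK d (t₀ - s) u v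
            * (fun t => -(tauTildeOR ω₁ M₁ q₁ e₁ t)) (v, s))
          + ∫ v, hK d t₀ u v * (fun t => -(tauTildeOR ω₂ M₂ q₂ e₂ t)) v)
            - Φ (0, 0) u)
          = fun u => -(SS u + Φ (0, 0) u) := by
        funext u
        simp only [hSS, mul_neg, MeasureTheory.integral_neg, intervalIntegral.integral_neg]
        ring
      rw [hfun] at h
      have hneg : (fun u => -(SS u + Φ (0, 0) u)) = -(fun u => SS u + Φ (0, 0) u) := rfl
      rwa [hneg, eLpNorm_neg] at h
    have hS_AESM : AEStronglyMeasurable SS volume := sum_AESM hd ht₀ hτ₁meas hτ₂meas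
    have htri : 2 * eLpNorm SS 1 volume
        ≤ eLpNorm (fun u => SS u - Φ (0, 0) u) 1 volume
          + eLpNorm (fun u => SS u + Φ (0, 0) u) 1 volume := by
      have hsum : (fun u => SS u - Φ (0, 0) u) + (fun u => SS u + Φ (0, 0) u)
          = (2 : ℝ) • SS := by
        funext u
        simp only [Pi.add_apply, Pi.smul_apply, smul_eq_mul]
        ring
      calc 2 * eLpNorm SS 1 volume = (‖(2:ℝ)‖₊ : ℝ≥0∞) * eLpNorm SS 1 volume := by
            norm_num
        _ = eLpNorm ((2:ℝ) • SS) 1 volume := (eLpNorm_const_smul _ _ _ _).symm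
        _ = eLpNorm ((fun u => SS u - Φ (0, 0) u) + fun u => SS u + Φ (0, 0) u) 1 volume := by
            rw [hsum]
        _ ≤ _ := eLpNorm_add_le (hS_AESM.sub hΦsm) (hS_AESM.add hΦsm) le_rfl
    have h2V : 2 * V ≤ 2 * ErrF d t₀ ω₁ ω₂ M₁ M₂ q₁ q₂ e₁ e₂ Φ := by
      calc 2 * V = 2 * eLpNorm SS 1 volume := by rw [hSval]
        _ ≤ _ := htri
        _ ≤ ErrF d t₀ ω₁ ω₂ M₁ M₂ q₁ q₂ e₁ e₂ Φ
              + ErrF d t₀ ω₁ ω₂ M₁ M₂ q₁ q₂ e₁ e₂ Φ := add_le_add hE₁ hE₂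
        _ = 2 * ErrF d t₀ ω₁ ω₂ M₁ M₂ q₁ q₂ e₁ e₂ Φ := (two_mul _).symm
    exact (ENNReal.mul_le_mul_iff_right two_ne_zero ENNReal.ofNat_ne_top).1 h2V
  -- MemLp of the optimal method
  have hmem : ∀ z, MemLp (Phi0F d t₀ ω₁ ω₂ M₁ M₂ q₁ q₂ e₁ e₂ z) 1
      (volume : Measure (EuclideanSpace ℝ (Fin d))) := by
    intro z
    have hL₁m := Lmeth_measurable (q := q₁) (e := e₁) hn₁ hM₁.isClosed hω₁_cont z.1
    have hL₂m := Lmeth_measurable (q := q₂) (e := e₂) hn₂ hM₂.isClosed hω₂_cont z.2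
    exact memLp_sum (p := LmethTildeOR ω₁ M₁ q₁ e₁ z.1)
      (q := LmethTildeOR ω₂ M₂ q₂ e₂ z.2) hd ht₀ hL₁m hL₂m
      (Lmeth_abs_le (ω := ω₁) (M' := M₁) (q := q₁) (e := e₁) hn₁ z.1)
      (Lmeth_abs_le (ω := ω₂) (M' := M₂) (q := q₂) (e := e₂) hn₂ z.2)
      (hsupp₁ _ (fun x hx => Lmeth_of_not_mem hx))
      (hsupp₂ _ (fun v hv => Lmeth_of_not_mem hv))
  have hEqV : ErrF d t₀ ω₁ ω₂ M₁ M₂ q₁ q₂ e₁ e₂ (Phi0F d t₀ ω₁ ω₂ M₁ M₂ q₁ q₂ e₁ e₂) = V :=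
    le_antisymm hUB (hLB _ ((hmem (0, 0)).aestronglyMeasurable))
  constructor
  · apply le_antisymm
    · exact iInf_le (fun Φ : {Φ : (Fin n₁ → ℝ) × (Fin n₂ → ℝ) →
          EuclideanSpace ℝ (Fin d) → ℝ //
          ∀ z, MemLp (Φ z) 1 (volume : Measure (EuclideanSpace ℝ (Fin d)))} =>
        ErrF d t₀ ω₁ ω₂ M₁ M₂ q₁ q₂ e₁ e₂ Φ.1) ⟨_, hmem⟩
    · refine le_iInf fun Φ => ?_
      rw [hEqV]
      exact hLB Φ.1 ((Φ.2 (0, 0)).aestronglyMeasurable)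
  · exact hEqV

end Final
/-- Optimal recovery of the solution to the Cauchy problem for the heat equation,
measured in `L¹` on the time slice `N = ℝ^d × {t₀}`. -/
theorem optimal_recovery_heat_time_slice
    (d : ℕ) (hd : 0 < d) (t₀ : ℝ) (ht₀ : 0 < t₀)
    (ω₁ ω₂ : ℝ → ℝ)
    (hω₁0 : ω₁ 0 = 0) (hω₁_cont : ContinuousOn ω₁ (Set.Ici 0))
    (hω₁_mono : MonotoneOn ω₁ (Set.Ici 0))
    (hω₁_subadd : ∀ s t : ℝ, 0 ≤ s → 0 ≤ t → ω₁ (s + t) ≤ ω₁ s + ω₁ t)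
    (hω₁_nonneg : ∀ s : ℝ, 0 ≤ s → 0 ≤ ω₁ s)
    (hω₂0 : ω₂ 0 = 0) (hω₂_cont : ContinuousOn ω₂ (Set.Ici 0))
    (hω₂_mono : MonotoneOn ω₂ (Set.Ici 0))
    (hω₂_subadd : ∀ s t : ℝ, 0 ≤ s → 0 ≤ t → ω₂ (s + t) ≤ ω₂ s + ω₂ t)
    (hω₂_nonneg : ∀ s : ℝ, 0 ≤ s → 0 ≤ ω₂ s)
    (M₁ : Set (EuclideanSpace ℝ (Fin d) × ℝ)) (hM₁ : IsCompact M₁)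
    (hM₁D : ∀ p ∈ M₁, 0 < p.2)
    (M₂ : Set (EuclideanSpace ℝ (Fin d))) (hM₂ : IsCompact M₂)
    {n₁ n₂ : ℕ} (hn₁ : 0 < n₁) (hn₂ : 0 < n₂)
    (q₁ : Fin n₁ → EuclideanSpace ℝ (Fin d) × ℝ) (hq₁ : ∀ j, q₁ j ∈ M₁)
    (q₂ : Fin n₂ → EuclideanSpace ℝ (Fin d)) (hq₂ : ∀ j, q₂ j ∈ M₂)
    (e₁ : Fin n₁ → ℝ) (he₁ : ∀ j, 0 ≤ e₁ j)
    (e₂ : Fin n₂ → ℝ) (he₂ : ∀ j, 0 ≤ e₂ j) :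
    -- the heat kernels and the solution operators of `∂x/∂t − Δx = f`, `x(·,0) = g`
    let heatK : ℝ → EuclideanSpace ℝ (Fin d) → EuclideanSpace ℝ (Fin d) → ℝ :=
      fun r u v => (4 * Real.pi * r) ^ (-(d : ℝ) / 2) * Real.exp (-(dist u v) ^ 2 / (4 * r))
    let A₁ : (EuclideanSpace ℝ (Fin d) × ℝ → ℝ) → EuclideanSpace ℝ (Fin d) → ℝ → ℝ :=
      fun f u t => ∫ s in (0 : ℝ)..t, ∫ v, heatK (t - s) u v * f (v, s)
    let A₂ : (EuclideanSpace ℝ (Fin d) → ℝ) → EuclideanSpace ℝ (Fin d) → ℝ → ℝ :=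
      fun g u t => ∫ v, heatK t u v * g v
    let W₁ := HtildeOR ω₁ M₁
    let W₂ := HtildeOR ω₂ M₂
    let τ₁ := tauTildeOR ω₁ M₁ q₁ e₁
    let τ₂ := tauTildeOR ω₂ M₂ q₂ e₂
    let Φ₀ : (Fin n₁ → ℝ) × (Fin n₂ → ℝ) → EuclideanSpace ℝ (Fin d) → ℝ := fun z u =>
      A₁ (LmethTildeOR ω₁ M₁ q₁ e₁ z.1) u t₀ + A₂ (LmethTildeOR ω₂ M₂ q₂ e₂ z.2) u t₀
    let Err : ((Fin n₁ → ℝ) × (Fin n₂ → ℝ) → EuclideanSpace ℝ (Fin d) → ℝ) → ℝ≥0∞ :=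
      fun Φ =>
        ⨆ f ∈ W₁, ⨆ g ∈ W₂, ⨆ z : (Fin n₁ → ℝ) × (Fin n₂ → ℝ),
          ⨆ (_ : (∀ j, |z.1 j - f (q₁ j)| ≤ e₁ j) ∧ ∀ j, |z.2 j - g (q₂ j)| ≤ e₂ j),
            eLpNorm (fun u => (A₁ f u t₀ + A₂ g u t₀) - Φ z u) 1
              (volume : Measure (EuclideanSpace ℝ (Fin d)))
    (⨅ Φ : {Φ : (Fin n₁ → ℝ) × (Fin n₂ → ℝ) → EuclideanSpace ℝ (Fin d) → ℝ //
        ∀ z, MemLp (Φ z) 1 (volume : Measure (EuclideanSpace ℝ (Fin d)))}, Err Φ.1) = Err Φ₀ ∧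
      Err Φ₀ = (∫⁻ v, ∫⁻ s in Set.Ioc (0 : ℝ) t₀, ENNReal.ofReal (τ₁ (v, s))) +
        ∫⁻ v, ENNReal.ofReal (τ₂ v) := by
  intro heatK A₁ A₂ W₁ W₂ τ₁ τ₂ Φ₀ Err
  exact optimal_master d hd t₀ ht₀ ω₁ ω₂ hω₁0 hω₁_cont hω₁_mono hω₁_subadd hω₁_nonneg
    hω₂0 hω₂_cont hω₂_mono hω₂_subadd hω₂_nonneg M₁ hM₁ M₂ hM₂ hn₁ hn₂ q₁ hq₁ q₂ hq₂
    e₁ he₁ e₂ he₂
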